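/- Let F satisfy the tangential cone condition with constant 0 ≤ η < 1 and linearization L on a ball containing z, let x̂ solve F(x̂) = y, and let ‖y − y^δ‖ ≤ δ. If ξ⁺ = ζ − μ L(z)* J_s(F(z) − y^δ) with μ ≥ 0, and Θ is p-convex with constant c₀, then D_{ξ⁺}Θ(x̂, x⁺) − D_ζΘ(x̂, z) ≤ −(1 − η − (1/p*)(μ̄₀/(2c₀))^{p*−1}) μ ‖F(z) − y^δ‖^s + (1+η) μ ‖F(z) − y^δ‖^{s−1} δ, provided μ^{p*−1}‖L(z)* J_s(F(z) − y^δ)‖^{p*} ≤ μ̄₀^{p*−1}‖F(z) − y^δ‖^s. -/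

import Mathlib

/-- Division rule for real powers with positive denominator (numerator may be negative). -/
lemma my_div_rpow_pos (a : ℝ) {b : ℝ} (hb : 0 < b) (w : ℝ) :
    (a / b) ^ w = a ^ w / b ^ w := by
  rcases le_or_gt 0 a with ha | ha
  · exact Real.div_rpow ha hb.le w
  · have hab : a / b < 0 := div_neg_of_neg_of_pos ha hb
    rw [Real.rpow_def_of_neg hab, Real.rpow_def_of_neg ha,
      Real.rpow_def_of_pos hb, Real.log_div ha.ne hb.ne', sub_mul, Real.exp_sub]
    ring

set_option maxHeartbeats 1000000 in
/-- Inequality (3.9): descent estimate for the gradient step of the two-point gradient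
method. -/
theorem tpg_gradient_step_estimate {X Y : Type*} [NormedAddCommGroup X] [NormedSpace ℝ X]
    [NormedAddCommGroup Y] [NormedSpace ℝ Y]
    (Θ : X → ℝ) (c₀ p s η δ μ μ₀ pstar : ℝ)
    (hc₀ : 0 < c₀) (hp : 2 ≤ p) (hs : 1 < s) (hpstar : pstar = p / (p - 1))
    (hη0 : 0 ≤ η) (hη1 : η < 1) (hδ : 0 ≤ δ) (hμ : 0 ≤ μ)
    (B : Set X) (F : X → Y) (L : X → (X →L[ℝ] Y))
    (htc : ∀ a ∈ B, ∀ b ∈ B, ‖F a - F b - L b (a - b)‖ ≤ η * ‖F a - F b‖)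
    (xh z xp : X) (hxhB : xh ∈ B) (hzB : z ∈ B)
    (y yδ : Y) (hsol : F xh = y) (hnoise : ‖y - yδ‖ ≤ δ)
    (Jsr : Y →L[ℝ] ℝ) (hJnorm : ‖Jsr‖ = ‖F z - yδ‖ ^ (s - 1))
    (hJval : Jsr (F z - yδ) = ‖F z - yδ‖ ^ s)
    (ζ ξp : X →L[ℝ] ℝ) (hξp : ξp = ζ - μ • (Jsr.comp (L z)))
    (hζsub : ∀ w, Θ z + ζ (w - z) ≤ Θ w)
    (hξpsub : ∀ w, Θ xp + ξp (w - xp) ≤ Θ w)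
    (hlem : Θ z - Θ xp - ξp (z - xp) ≤
      (1 / (pstar * (2 * c₀) ^ (pstar - 1))) * ‖ξp - ζ‖ ^ pstar)
    (hstep : μ ^ (pstar - 1) * ‖Jsr.comp (L z)‖ ^ pstar ≤
      μ₀ ^ (pstar - 1) * ‖F z - yδ‖ ^ s) :
    (Θ xh - Θ xp - ξp (xh - xp)) - (Θ xh - Θ z - ζ (xh - z)) ≤
      -(1 - η - (1 / pstar) * (μ₀ / (2 * c₀)) ^ (pstar - 1)) * μ * ‖F z - yδ‖ ^ s
      + (1 + η) * μ * ‖F z - yδ‖ ^ (s - 1) * δ := by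
  set n := ‖F z - yδ‖ with hn
  have hn0 : 0 ≤ n := norm_nonneg _
  have hp1 : (0:ℝ) < p - 1 := by linarith
  have hq1 : 1 < pstar := by
    rw [hpstar, lt_div_iff₀ hp1]; linarith
  have hq0 : 0 < pstar := by linarith
  -- rewrite LHS
  have key : (Θ xh - Θ xp - ξp (xh - xp)) - (Θ xh - Θ z - ζ (xh - z))
      = (Θ z - Θ xp - ξp (z - xp)) + μ * Jsr (L z (xh - z)) := by
    have h1 : ξp (xh - xp) = ξp (z - xp) + ξp (xh - z) := by
      rw [← map_add]; congr 1; abel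
    have h2 : ξp (xh - z) = ζ (xh - z) - μ * Jsr (L z (xh - z)) := by
      rw [hξp]
      simp [ContinuousLinearMap.sub_apply, ContinuousLinearMap.smul_apply,
        ContinuousLinearMap.comp_apply, smul_eq_mul]
    rw [h1, h2]; ring
  -- tangential cone residual
  have hr : ‖F xh - F z - L z (xh - z)‖ ≤ η * ‖F xh - F z‖ := htc xh hxhB z hzB
  have hLz : L z (xh - z) = (F xh - F z) - (F xh - F z - L z (xh - z)) := by abel
  have hFdiff : F xh - F z = (y - yδ) - (F z - yδ) := by rw [hsol]; abel
  have hFdist : ‖F xh - F z‖ ≤ δ + n := by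
    calc ‖F xh - F z‖ = ‖(y - yδ) - (F z - yδ)‖ := by rw [hFdiff]
      _ ≤ ‖y - yδ‖ + ‖F z - yδ‖ := norm_sub_le _ _
      _ ≤ δ + n := by rw [← hn]; exact add_le_add hnoise le_rfl
  have hns : n ^ (s - 1) * n = n ^ s := by
    have h := (Real.rpow_add' hn0 (show (s-1) + 1 ≠ 0 by linarith)).symm
    rw [Real.rpow_one] at h
    rw [h, show (s-1) + 1 = s by ring]
  have hb1 : Jsr (y - yδ) ≤ n ^ (s-1) * δ := by
    calc Jsr (y - yδ) ≤ ‖Jsr (y - yδ)‖ := le_abs_self _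
      _ ≤ ‖Jsr‖ * ‖y - yδ‖ := Jsr.le_opNorm _
      _ ≤ n ^ (s-1) * δ := by
          rw [hJnorm]
          exact mul_le_mul_of_nonneg_left hnoise (Real.rpow_nonneg hn0 _)
  have hb2 : -Jsr (F xh - F z - L z (xh - z)) ≤ n ^ (s-1) * (η * (δ + n)) := by
    calc -Jsr (F xh - F z - L z (xh - z)) ≤ ‖Jsr (F xh - F z - L z (xh - z))‖ :=
          neg_le_abs _
      _ ≤ ‖Jsr‖ * ‖F xh - F z - L z (xh - z)‖ := Jsr.le_opNorm _
      _ ≤ n ^ (s-1) * (η * (δ + n)) := by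
          rw [hJnorm]
          refine mul_le_mul_of_nonneg_left ?_ (Real.rpow_nonneg hn0 _)
          exact hr.trans (mul_le_mul_of_nonneg_left hFdist hη0)
  -- gradient term bound
  have hT : Jsr (L z (xh - z))
      = Jsr (y - yδ) - Jsr (F z - yδ) - Jsr (F xh - F z - L z (xh - z)) := by
    rw [← map_sub, ← map_sub]
    congr 1
    rw [hsol]
    abel
  have hgrad : μ * Jsr (L z (xh - z))
      ≤ μ * (-(1 - η) * n ^ s + (1 + η) * (n ^ (s-1) * δ)) := by
    refine mul_le_mul_of_nonneg_left ?_ hμ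
    rw [hT, hJval]
    nlinarith [hb1, hb2, hns]
  -- Bregman term bound
  have hK : ‖ξp - ζ‖ = μ * ‖Jsr.comp (L z)‖ := by
    have h : ξp - ζ = -(μ • (Jsr.comp (L z))) := by rw [hξp, sub_sub_cancel_left]
    rw [h, norm_neg, norm_smul μ (Jsr.comp (L z)), Real.norm_eq_abs, abs_of_nonneg hμ]
  have hKq : ‖ξp - ζ‖ ^ pstar ≤ μ * (μ₀ ^ (pstar - 1) * n ^ s) := by
    rw [hK, Real.mul_rpow hμ (norm_nonneg _)]
    have hμq : μ ^ pstar = μ * μ ^ (pstar - 1) := by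
      nth_rewrite 1 [show pstar = 1 + (pstar - 1) by ring]
      rw [Real.rpow_add' hμ (by linarith), Real.rpow_one]
    rw [hμq, mul_assoc]
    exact mul_le_mul_of_nonneg_left hstep hμ
  have h2c : (0:ℝ) < (2 * c₀) ^ (pstar - 1) := Real.rpow_pos_of_pos (by linarith) _
  have hμ₀eq : μ₀ ^ (pstar - 1) = (μ₀ / (2 * c₀)) ^ (pstar - 1) * (2 * c₀) ^ (pstar - 1) := by
    rw [my_div_rpow_pos μ₀ (by linarith) (pstar - 1)]
    field_simp
  have hD : Θ z - Θ xp - ξp (z - xp)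
      ≤ (1 / pstar) * (μ₀ / (2 * c₀)) ^ (pstar - 1) * μ * n ^ s := by
    refine hlem.trans ?_
    have hcoef : (0:ℝ) ≤ 1 / (pstar * (2 * c₀) ^ (pstar - 1)) :=
      le_of_lt (by positivity)
    refine (mul_le_mul_of_nonneg_left hKq hcoef).trans (le_of_eq ?_)
    rw [hμ₀eq]
    field_simp
  rw [key]
  nlinarith [hD, hgrad]
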